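/- Let T have the wandering subspace property and set M := closed span of ⋃_{w ∈ bpe(T)} E_w*(ker T*). Then the orthogonal complement M⊥ is invariant under T. -/

import Mathlib

open ContinuousLinearMap Submodule Filter

noncomputable section

variable {H : Type*} [NormedAddCommGroup H] [InnerProductSpace ℂ H] [CompleteSpace H]

/-- The wandering subspace `ker T*`. -/
def kerAdj (T : H →L[ℂ] H) : Submodule ℂ H := LinearMap.ker (ContinuousLinearMap.adjoint T : H →ₗ[ℂ] H)

/-- `T` has the wandering subspace property: the closed linear span of
`⋃ₙ Tⁿ(ker T*)` is all of `H`. -/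
def WSP (T : H →L[ℂ] H) : Prop :=
  (⨆ n : ℕ, (kerAdj T).map ((T ^ n : H →L[ℂ] H) : H →ₗ[ℂ] H)).topologicalClosure = ⊤

/-- `w` is a bounded point evaluation for `T`: `‖p(w)‖ ≤ c ‖p(T)‖` for all
`ker T*`-valued polynomials `p`, where `p(T) = Σ Tⁿ xₙ` for `p(z) = Σ xₙ zⁿ`. -/
def IsBPE (T : H →L[ℂ] H) (w : ℂ) : Prop :=
  ∃ c > (0 : ℝ), ∀ (k : ℕ) (x : ℕ → H), (∀ n, x n ∈ kerAdj T) →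
    ‖∑ n ∈ Finset.range (k + 1), w ^ n • x n‖ ≤
      c * ‖∑ n ∈ Finset.range (k + 1), (T ^ n) (x n)‖

/-- `E` is the (continuous extension of the) evaluation operator at `w`:
it takes values in `ker T*` and sends `p(T)` to `p(w)`. -/
def IsEval (T : H →L[ℂ] H) (w : ℂ) (E : H →L[ℂ] H) : Prop :=
  (∀ y, E y ∈ kerAdj T) ∧
    ∀ (k : ℕ) (x : ℕ → H), (∀ n, x n ∈ kerAdj T) →
      E (∑ n ∈ Finset.range (k + 1), (T ^ n) (x n)) =
        ∑ n ∈ Finset.range (k + 1), w ^ n • x n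

lemma eval_pow {T : H →L[ℂ] H} {w : ℂ} {Ew : H →L[ℂ] H} (hEw : IsEval T w Ew)
    {u : H} (hu : u ∈ kerAdj T) (n : ℕ) : Ew ((T ^ n) u) = w ^ n • u := by
  have h := hEw.2 n (fun m => if m = n then u else 0)
    (fun m => by by_cases hmn : m = n <;> simp [hmn, hu, Submodule.zero_mem])
  have h1 : ∑ m ∈ Finset.range (n + 1), (T ^ m) (if m = n then u else 0) = (T ^ n) u := by
    rw [Finset.sum_eq_single n] <;> simp_all
  have h2 : ∑ m ∈ Finset.range (n + 1), w ^ m • (if m = n then u else 0) = w ^ n • u := by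
    rw [Finset.sum_eq_single n] <;> simp_all
  rw [h1, h2] at h
  exact h

lemma eval_comp {T : H →L[ℂ] H} {w : ℂ} {Ew : H →L[ℂ] H} (hT : WSP T)
    (hEw : IsEval T w Ew) : Ew.comp T = w • Ew := by
  have hdense : Dense ((⨆ n : ℕ, (kerAdj T).map ((T ^ n : H →L[ℂ] H) : H →ₗ[ℂ] H) : Submodule ℂ H) : Set H) :=
    Submodule.dense_iff_topologicalClosure_eq_top.mpr hT
  apply DFunLike.coe_injective
  refine Continuous.ext_on hdense (Ew.comp T).continuous (w • Ew).continuous ?_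
  intro x hx
  induction hx using Submodule.iSup_induction' with
  | mem n x hx =>
      obtain ⟨u, hu, rfl⟩ := hx
      show Ew (T ((T ^ n) u)) = w • Ew ((T ^ n) u)
      have h1 : T ((T ^ n) u) = (T ^ (n + 1)) u := by rw [pow_succ']; rfl
      rw [h1, eval_pow hEw hu, eval_pow hEw hu, pow_succ', mul_smul]
  | zero => simp
  | add x hx y hy ihx ihy => simp_all

/-- `M⊥` is invariant under `T`, where `M` is the closed span of
`⋃_{w ∈ bpe(T)} E_w*(ker T*)`. -/
theorem stmt_14 [TopologicalSpace.SeparableSpace H] (T : H →L[ℂ] H) (hT : WSP T)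
    (E : ℂ → (H →L[ℂ] H)) (hE : ∀ w : ℂ, IsBPE T w → IsEval T w (E w))
    (M : Submodule ℂ H)
    (hM : M = (⨆ w ∈ {w : ℂ | IsBPE T w},
      (kerAdj T).map (ContinuousLinearMap.adjoint (E w) : H →ₗ[ℂ] H)).topologicalClosure) :
    ∀ x ∈ Mᗮ, T x ∈ Mᗮ := by
  set S : Submodule ℂ H := ⨆ w ∈ {w : ℂ | IsBPE T w},
      (kerAdj T).map (ContinuousLinearMap.adjoint (E w) : H →ₗ[ℂ] H) with hS
  have hle : S ≤ Submodule.comap (ContinuousLinearMap.adjoint T : H →ₗ[ℂ] H) S := by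
    conv_lhs => rw [hS]
    refine iSup₂_le fun w hw => ?_
    rintro m ⟨u, hu, rfl⟩
    rw [Submodule.mem_comap]
    have hcomp := eval_comp hT (hE w hw)
    have hadj_eq : (ContinuousLinearMap.adjoint T).comp (ContinuousLinearMap.adjoint (E w))
        = (starRingEnd ℂ w) • ContinuousLinearMap.adjoint (E w) := by
      rw [← ContinuousLinearMap.adjoint_comp, hcomp, map_smulₛₗ]
    have heq : ContinuousLinearMap.adjoint T (ContinuousLinearMap.adjoint (E w) u)
        = ContinuousLinearMap.adjoint (E w) ((starRingEnd ℂ w) • u) := by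
      have h := congrArg (fun f => f u) hadj_eq
      simpa using h
    rw [ContinuousLinearMap.coe_coe, ContinuousLinearMap.coe_coe, heq, hS]
    exact Submodule.mem_iSup_of_mem w (Submodule.mem_iSup_of_mem hw
      ⟨(starRingEnd ℂ w) • u, Submodule.smul_mem _ _ hu, rfl⟩)
  have hadjM : ∀ m ∈ M, ContinuousLinearMap.adjoint T m ∈ M := by
    intro m hm
    rw [hM] at hm ⊢
    exact map_mem_closure (ContinuousLinearMap.adjoint T).continuous hm (fun y hy => hle hy)
  intro x hx
  rw [Submodule.mem_orthogonal] at hx ⊢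
  intro m hm
  rw [← ContinuousLinearMap.adjoint_inner_left]
  exact hx _ (hadjM m hm)
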